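/- Let n ≥ 2 be even and d ≥ 1. Then every cell of the n^d tic-tac-toe board is contained in at most 2^d − 1 winning lines, and if a cell (x_1,...,x_d) has the property that there is a common c in [n] with x_j ∈ {c, n+1−c} for every j = 1,...,d, then that cell is contained in exactly 2^d − 1 winning lines. -/

import Mathlib

/-- `isWinningLine n d L` says that the finset `L` of cells of the `n^d`
tic-tac-toe board (cells being `d`-tuples with entries in `Fin n`, the
`0`-based version of `{1,…,n}`) is a winning line: its cells can be ordered
as `v 0, …, v (n-1)` so that each coordinate either increases `0,…,n-1`,
decreases `n-1,…,0`, or is constant, and at least one coordinate is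
non-constant. -/
def isWinningLine (n d : ℕ) (L : Finset (Fin d → Fin n)) : Prop :=
  ∃ v : Fin n → Fin d → Fin n,
    L = Finset.image v Finset.univ ∧
    (∀ i : Fin d,
      (∀ j : Fin n, v j i = j) ∨
      (∀ j : Fin n, v j i = j.rev) ∨
      (∃ c : Fin n, ∀ j : Fin n, v j i = c)) ∧
    (∃ i : Fin d, ¬ ∃ c : Fin n, ∀ j : Fin n, v j i = c)

namespace DegreeAux

open Finset

variable {n d : ℕ}

/-- The line vector associated to a cell `x` and a sign pattern `ε`. -/
def lineVec (x : Fin d → Fin n) (ε : Fin d → Option Bool) : Fin n → Fin d → Fin n :=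
  fun k i => match ε i with
  | none => x i
  | some true => k
  | some false => k.rev

def flipO : Option Bool → Option Bool
  | none => none
  | some b => some (!b)

lemma flipO_eq_none {e : Option Bool} : flipO e = none ↔ e = none := by
  cases e with
  | none => simp [flipO]
  | some b => simp [flipO]

lemma flipO_eq_some_true {e : Option Bool} : flipO e = some true ↔ e = some false := by
  cases e with
  | none => simp [flipO]
  | some b => cases b <;> simp [flipO]

lemma flipO_eq_some_false {e : Option Bool} : flipO e = some false ↔ e = some true := by
  cases e with
  | none => simp [flipO]
  | some b => cases b <;> simp [flipO]

/-- Parameter data for a (normalized) winning line through `x`. -/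
def Good (x : Fin d → Fin n) (p : Fin n × (Fin d → Option Bool)) : Prop :=
  2 * (p.1 : ℕ) < n ∧ (∃ i, p.2 i ≠ none) ∧
    ∀ i, (p.2 i = some true → x i = p.1) ∧ (p.2 i = some false → x i = p.1.rev)

lemma lineVec_eq_of_eq (hn : 2 ≤ n) {x : Fin d → Fin n} {ε ε' : Fin d → Option Bool}
    (h : ∀ k, lineVec x ε k = lineVec x ε' k) : ε = ε' := by
  set k0 : Fin n := ⟨0, by omega⟩ with hk0
  set k1 : Fin n := ⟨1, by omega⟩ with hk1
  have hrev : ∀ k : Fin n, (Fin.rev k : ℕ) = n - 1 - (k : ℕ) := by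
    intro k; rw [Fin.val_rev]; omega
  funext i
  have e0 := congrFun (h k0) i
  have e1 := congrFun (h k1) i
  cases ha : ε i with
  | none =>
    cases hb : ε' i with
    | none => rfl
    | some b =>
      cases b
      · simp only [lineVec, ha, hb] at e0 e1
        rw [e1] at e0
        have := congrArg Fin.val e0
        rw [hrev, hrev] at this
        simp [hk0, hk1] at this
        omega
      · simp only [lineVec, ha, hb] at e0 e1
        rw [e1] at e0
        have := congrArg Fin.val e0
        simp [hk0, hk1] at this
  | some a =>
    cases hb : ε' i with
    | none =>
      cases a
      · simp only [lineVec, ha, hb] at e0 e1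
        rw [← e1] at e0
        have := congrArg Fin.val e0
        rw [hrev, hrev] at this
        simp [hk0, hk1] at this
        omega
      · simp only [lineVec, ha, hb] at e0 e1
        rw [← e1] at e0
        have := congrArg Fin.val e0
        simp [hk0, hk1] at this
    | some b =>
      cases a <;> cases b
      · rfl
      · simp only [lineVec, ha, hb] at e0
        have := congrArg Fin.val e0
        rw [hrev] at this
        simp [hk0] at this
        omega
      · simp only [lineVec, ha, hb] at e0
        have := congrArg Fin.val e0
        rw [hrev] at this
        simp [hk0] at this
        omega
      · rfl

lemma good_inj (hn : 2 ≤ n) (heven : Even n) {x : Fin d → Fin n}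
    {p q : Fin n × (Fin d → Option Bool)} (hp : Good x p) (hq : Good x q)
    (h : Finset.image (lineVec x p.2) Finset.univ
        = Finset.image (lineVec x q.2) Finset.univ) : p = q := by
  classical
  obtain ⟨m, hm⟩ := heven
  obtain ⟨j, ε⟩ := p
  obtain ⟨j', ε'⟩ := q
  obtain ⟨hj, ⟨i0, hi0⟩, hcons⟩ := hp
  obtain ⟨hj', -, hcons'⟩ := hq
  simp only at hj hj' hcons hcons' hi0 h ⊢
  have hrev : ∀ k : Fin n, (Fin.rev k : ℕ) = n - 1 - (k : ℕ) := by
    intro k; rw [Fin.val_rev]; omega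
  set k0 : Fin n := ⟨0, by omega⟩ with hk0
  set k1 : Fin n := ⟨1, by omega⟩ with hk1
  have key : ∀ k : Fin n, ∃ k', lineVec x ε' k' = lineVec x ε k := by
    intro k
    have : lineVec x ε k ∈ Finset.image (lineVec x ε') Finset.univ := by
      rw [← h]
      exact Finset.mem_image_of_mem _ (Finset.mem_univ k)
    simpa using this
  have hvj := j.isLt
  have hvj' := j'.isLt
  rcases Option.ne_none_iff_exists'.mp hi0 with ⟨a, ha⟩
  cases hb : ε' i0 with
  | none =>
    exfalso
    obtain ⟨k0', e0⟩ := key k0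
    obtain ⟨k1', e1⟩ := key k1
    have e0' := congrFun e0 i0
    have e1' := congrFun e1 i0
    cases a
    · simp only [lineVec, ha, hb] at e0' e1'
      rw [e0'] at e1'
      have := congrArg Fin.val (Fin.rev_injective e1')
      simp [hk0, hk1] at this
    · simp only [lineVec, ha, hb] at e0' e1'
      rw [e0'] at e1'
      have := congrArg Fin.val e1'
      simp [hk0, hk1] at this
  | some b =>
    have hab : a = b := by
      by_contra hne
      cases a <;> cases b
      · exact hne rfl
      · have e1 := (hcons i0).2 ha
        have e2 := (hcons' i0).1 hb
        rw [e2] at e1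
        have := congrArg Fin.val e1
        rw [hrev] at this
        omega
      · have e1 := (hcons i0).1 ha
        have e2 := (hcons' i0).2 hb
        rw [e1] at e2
        have := congrArg Fin.val e2
        rw [hrev] at this
        omega
      · exact hne rfl
    subst hab
    have hvv : ∀ k, lineVec x ε' k = lineVec x ε k := by
      intro k
      obtain ⟨k', e⟩ := key k
      have e' := congrFun e i0
      cases a
      · simp only [lineVec, ha, hb] at e'
        rw [Fin.rev_injective e'] at e
        exact e
      · simp only [lineVec, ha, hb] at e'
        rw [e'] at e
        exact e
    have hje : ε' = ε := lineVec_eq_of_eq hn hvv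
    have hjj : j = j' := by
      cases a
      · exact Fin.rev_injective (((hcons i0).2 ha) ▸ ((hcons' i0).2 hb))
      · exact (((hcons i0).1 ha) ▸ ((hcons' i0).1 hb))
    rw [hjj, hje]

lemma line_winning (hn : 2 ≤ n) {x : Fin d → Fin n} {p : Fin n × (Fin d → Option Bool)}
    (hp : Good x p) :
    isWinningLine n d (Finset.image (lineVec x p.2) Finset.univ) ∧
      x ∈ Finset.image (lineVec x p.2) Finset.univ := by
  obtain ⟨j, ε⟩ := p
  obtain ⟨hj, ⟨i0, hi0⟩, hcons⟩ := hp
  set k0 : Fin n := ⟨0, by omega⟩ with hk0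
  set k1 : Fin n := ⟨1, by omega⟩ with hk1
  constructor
  · refine ⟨lineVec x ε, rfl, ?_, ?_⟩
    · intro i
      cases ha : ε i with
      | none => exact Or.inr (Or.inr ⟨x i, fun k => by simp [lineVec, ha]⟩)
      | some a =>
        cases a
        · exact Or.inr (Or.inl fun k => by simp [lineVec, ha])
        · exact Or.inl fun k => by simp [lineVec, ha]
    · refine ⟨i0, ?_⟩
      rintro ⟨c, hc⟩
      have e0 := hc k0
      have e1 := hc k1
      cases ha : ε i0 with
      | none => exact hi0 ha
      | some a =>
        cases a
        · simp only [lineVec, ha] at e0 e1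
          rw [← e1] at e0
          have := congrArg Fin.val ((Fin.rev_injective) e0)
          simp [hk0, hk1] at this
        · simp only [lineVec, ha] at e0 e1
          rw [← e1] at e0
          have := congrArg Fin.val e0
          simp [hk0, hk1] at this
  · refine Finset.mem_image.mpr ⟨j, Finset.mem_univ _, ?_⟩
    funext i
    cases ha : ε i with
    | none => simp [lineVec, ha]
    | some a =>
      cases a
      · simp only [lineVec, ha]
        exact ((hcons i).2 ha).symm
      · simp only [lineVec, ha]
        exact ((hcons i).1 ha).symm

noncomputable def F (x : Fin d → Fin n) (hn : 2 ≤ n)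
    (p : {p : Fin n × (Fin d → Option Bool) // Good x p}) :
    {L : Finset (Fin d → Fin n) // isWinningLine n d L ∧ x ∈ L} :=
  ⟨Finset.image (lineVec x p.1.2) Finset.univ, line_winning hn p.2⟩

lemma good_surj (hn : 2 ≤ n) {x : Fin d → Fin n}
    {L : Finset (Fin d → Fin n)} (hw : isWinningLine n d L) (hx : x ∈ L) :
    ∃ p : Fin n × (Fin d → Option Bool), Good x p ∧
      Finset.image (lineVec x p.2) Finset.univ = L := by
  classical
  obtain ⟨v, hL, hdir, i1, hnc⟩ := hw
  have hrev : ∀ k : Fin n, (Fin.rev k : ℕ) = n - 1 - (k : ℕ) := by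
    intro k; rw [Fin.val_rev]; omega
  obtain ⟨kx, -, hkx⟩ : ∃ kx ∈ Finset.univ, v kx = x := by
    rw [hL] at hx
    simpa using (Finset.mem_image.mp hx)
  set ε : Fin d → Option Bool := fun i =>
    if ∀ k : Fin n, v k i = k then some true
    else if ∀ k : Fin n, v k i = k.rev then some false
    else none with hεdef
  have hcases : ∀ i, (ε i = some true ∧ ∀ k, v k i = k) ∨
      (ε i = some false ∧ ∀ k, v k i = k.rev) ∨ (ε i = none ∧ ∃ c, ∀ k, v k i = c) := by
    intro i
    by_cases h1 : ∀ k : Fin n, v k i = k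
    · exact Or.inl ⟨by simp only [hεdef, if_pos h1], h1⟩
    · by_cases h2 : ∀ k : Fin n, v k i = k.rev
      · exact Or.inr (Or.inl ⟨by simp only [hεdef, if_neg h1, if_pos h2], h2⟩)
      · refine Or.inr (Or.inr ⟨by simp only [hεdef, if_neg h1, if_neg h2], ?_⟩)
        rcases hdir i with h | h | h
        · exact absurd h h1
        · exact absurd h h2
        · exact h
  have hε_true : ∀ i, ε i = some true → ∀ k, v k i = k := by
    intro i hi
    rcases hcases i with ⟨_, h⟩ | ⟨h', _⟩ | ⟨h', _⟩
    · exact h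
    · rw [h'] at hi; exact absurd (Option.some.inj hi) (by simp)
    · rw [h'] at hi; exact nomatch hi
  have hε_false : ∀ i, ε i = some false → ∀ k, v k i = k.rev := by
    intro i hi
    rcases hcases i with ⟨h', _⟩ | ⟨_, h⟩ | ⟨h', _⟩
    · rw [h'] at hi; exact absurd (Option.some.inj hi) (by simp)
    · exact h
    · rw [h'] at hi; exact nomatch hi
  have hε_none : ∀ i, ε i = none → ∃ c, ∀ k, v k i = c := by
    intro i hi
    rcases hcases i with ⟨h', _⟩ | ⟨h', _⟩ | ⟨_, h⟩
    · rw [h'] at hi; exact nomatch hi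
    · rw [h'] at hi; exact nomatch hi
    · exact h
  have hveq : v = lineVec x ε := by
    funext k i
    cases hi : ε i with
    | none =>
      obtain ⟨c, hc⟩ := hε_none i hi
      simp only [lineVec, hi]
      rw [hc k, ← hkx, hc kx]
    | some a =>
      cases a
      · simp only [lineVec, hi]
        exact hε_false i hi k
      · simp only [lineVec, hi]
        exact hε_true i hi k
  have hsupp : ε i1 ≠ none := fun hh => hnc (hε_none i1 hh)
  by_cases hk2 : 2 * (kx : ℕ) < n
  · refine ⟨(kx, ε), ⟨hk2, ⟨i1, hsupp⟩, ?_⟩, ?_⟩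
    · intro i
      constructor
      · intro hh
        rw [← hkx]
        exact hε_true i hh kx
      · intro hh
        rw [← hkx]
        exact hε_false i hh kx
    · rw [← hveq, hL]
  · have hkx2 : 2 * ((Fin.rev kx : Fin n) : ℕ) < n := by
      have := kx.isLt
      rw [hrev]; omega
    refine ⟨(kx.rev, fun i => flipO (ε i)), ⟨hkx2, ⟨i1, ?_⟩, ?_⟩, ?_⟩
    · simpa [flipO_eq_none] using hsupp
    · intro i
      constructor
      · intro hh
        rw [← hkx]
        exact hε_false i (flipO_eq_some_true.mp hh) kx
      · intro hh
        rw [← hkx, Fin.rev_rev]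
        exact hε_true i (flipO_eq_some_false.mp hh) kx
    · have hcomp : ∀ k, lineVec x (fun i => flipO (ε i)) k = lineVec x ε (Fin.rev k) := by
        intro k
        funext i
        cases hi : ε i with
        | none => simp only [lineVec, hi, flipO]
        | some a =>
          cases a
          · simp [lineVec, hi, flipO, Fin.rev_rev]
          · simp [lineVec, hi, flipO]
      have : Finset.image (lineVec x fun i => flipO (ε i)) Finset.univ
          = Finset.image (lineVec x ε) (Finset.image Fin.rev Finset.univ) := by
        rw [Finset.image_image]
        exact Finset.image_congr (fun k _ => hcomp k)
      rw [this, Finset.image_univ_of_surjective Fin.rev_surjective, ← hveq, hL]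

lemma F_bijective (hn : 2 ≤ n) (heven : Even n) (x : Fin d → Fin n) :
    Function.Bijective (F x hn) := by
  constructor
  · intro p q h
    exact Subtype.ext (good_inj hn heven p.2 q.2 (congrArg Subtype.val h))
  · rintro ⟨L, hw, hx⟩
    obtain ⟨p, hp, himg⟩ := good_surj hn hw hx
    exact ⟨⟨p, hp⟩, Subtype.ext himg⟩

noncomputable def G (x : Fin d → Fin n)
    (p : {p : Fin n × (Fin d → Option Bool) // Good x p}) :
    {S : Fin d → Bool // ∃ i, S i = true} :=
  ⟨fun i => (p.1.2 i).isSome, by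
    obtain ⟨_, ⟨i, hi⟩, _⟩ := p.2
    exact ⟨i, Option.isSome_iff_ne_none.mpr hi⟩⟩

lemma G_injective (hn : 2 ≤ n) (heven : Even n) (x : Fin d → Fin n) :
    Function.Injective (G x) := by
  rintro ⟨p, hp⟩ ⟨q, hq⟩ hpq
  have h : (fun i => (p.2 i).isSome) = (fun i => (q.2 i).isSome) :=
    congrArg Subtype.val hpq
  refine Subtype.ext ?_
  obtain ⟨m, hm⟩ := heven
  obtain ⟨j, ε⟩ := p
  obtain ⟨j', ε'⟩ := q
  obtain ⟨hj, ⟨i0, hi0⟩, hcons⟩ := hp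
  obtain ⟨hj', -, hcons'⟩ := hq
  simp only at hj hj' hcons hcons' hi0 ⊢
  have hrev : ∀ k : Fin n, (Fin.rev k : ℕ) = n - 1 - (k : ℕ) := by
    intro k; rw [Fin.val_rev]; omega
  have hsupp : ∀ i, ε i = none ↔ ε' i = none := by
    intro i
    have := congrFun h i
    simp only [← Option.not_isSome_iff_eq_none]
    rw [this]
  have hjj : j = j' := by
    have hi0' : ε' i0 ≠ none := fun hh => hi0 ((hsupp i0).mpr hh)
    rcases Option.ne_none_iff_exists'.mp hi0 with ⟨a, ha⟩
    rcases Option.ne_none_iff_exists'.mp hi0' with ⟨b, hb⟩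
    have hvj := j.isLt
    have hvj' := j'.isLt
    cases a <;> cases b
    · have e1 := (hcons i0).2 ha
      have e2 := (hcons' i0).2 hb
      exact Fin.rev_injective (e1 ▸ e2 ▸ rfl : j.rev = j'.rev) |>.symm ▸ rfl
    · have e1 := (hcons i0).2 ha
      have e2 := (hcons' i0).1 hb
      rw [e2] at e1
      have := congrArg Fin.val e1
      rw [hrev] at this
      exact absurd this (by omega)
    · have e1 := (hcons i0).1 ha
      have e2 := (hcons' i0).2 hb
      rw [e2] at e1
      have := congrArg Fin.val e1
      rw [hrev] at this
      exact absurd this (by omega)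
    · have e1 := (hcons i0).1 ha
      have e2 := (hcons' i0).1 hb
      rw [e1] at e2
      exact e2
  have hje : ε = ε' := by
    funext i
    cases ha : ε i with
    | none => exact ((hsupp i).mp ha).symm
    | some a =>
      have hne : ε' i ≠ none := by
        intro hh
        rw [(hsupp i).mpr hh] at ha
        exact nomatch ha
      rcases Option.ne_none_iff_exists'.mp hne with ⟨b, hb⟩
      rw [hb]
      have hvj := j.isLt
      cases a <;> cases b
      · rfl
      · have e1 := (hcons i).2 ha
        have e2 := (hcons' i).1 hb
        rw [← hjj] at e2
        rw [e2] at e1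
        have := congrArg Fin.val e1
        rw [hrev] at this
        exact absurd this (by omega)
      · have e1 := (hcons i).1 ha
        have e2 := (hcons' i).2 hb
        rw [← hjj] at e2
        rw [e1] at e2
        have := congrArg Fin.val e2
        rw [hrev] at this
        exact absurd this (by omega)
      · rfl
  rw [hjj, hje]

lemma G_surjective (hn : 2 ≤ n) (heven : Even n) (x : Fin d → Fin n)
    (hc : ∃ c : Fin n, ∀ i : Fin d, x i = c ∨ x i = c.rev) :
    Function.Surjective (G x) := by
  classical
  obtain ⟨c, hc⟩ := hc
  obtain ⟨m, hm⟩ := heven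
  rintro ⟨S, i1, hi1⟩
  have hrev : ∀ k : Fin n, (Fin.rev k : ℕ) = n - 1 - (k : ℕ) := by
    intro k; rw [Fin.val_rev]; omega
  have hvc := c.isLt
  set j : Fin n := if 2 * (c : ℕ) < n then c else c.rev with hjdef
  have hj2 : 2 * (j : ℕ) < n := by
    by_cases hca : 2 * (c : ℕ) < n
    · simp [hjdef, hca]
    · simp only [hjdef, if_neg hca]
      rw [hrev]; omega
  have hcj : ∀ i, x i = j ∨ x i = j.rev := by
    intro i
    by_cases hca : 2 * (c : ℕ) < n
    · simpa [hjdef, hca] using hc i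
    · simp only [hjdef, if_neg hca]
      rcases hc i with h | h
      · exact Or.inr (by rw [h, Fin.rev_rev])
      · exact Or.inl h
  refine ⟨⟨(j, fun i => if S i then (if x i = j then some true else some false) else none),
    hj2, ⟨i1, by by_cases hx : x i1 = j <;> simp [hi1, hx]⟩, ?_⟩, ?_⟩
  · intro i
    constructor
    · intro hh
      by_cases hs : S i
      · by_cases hx : x i = j
        · exact hx
        · simp [hs, hx] at hh
      · simp [hs] at hh
    · intro hh
      by_cases hs : S i
      · by_cases hx : x i = j
        · simp [hs, hx] at hh
        · rcases hcj i with h | h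
          · exact absurd h hx
          · exact h
      · simp [hs] at hh
  · refine Subtype.ext ?_
    funext i
    by_cases hs : S i
    · by_cases hx : x i = j <;> simp [G, hs, hx]
    · simp only [G, if_neg hs, Option.isSome_none]
      exact (Bool.not_eq_true (S i)).mp hs |>.symm

lemma card_ne : Nat.card {S : Fin d → Bool // ∃ i, S i = true} = 2 ^ d - 1 := by
  classical
  rw [Nat.card_eq_fintype_card, Fintype.card_subtype]
  have : Finset.filter (fun S : Fin d → Bool => ∃ i, S i = true) Finset.univ
      = Finset.univ.erase (fun _ => false) := by
    ext S
    simp only [Finset.mem_filter, Finset.mem_univ, true_and, Finset.mem_erase, and_true]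
    constructor
    · rintro ⟨i, hi⟩ hS
      rw [hS] at hi
      exact Bool.false_ne_true hi
    · intro hS
      by_contra h
      push_neg at h
      exact hS (funext fun i => by simpa using h i)
  rw [this, Finset.card_erase_of_mem (Finset.mem_univ _)]
  simp [Fintype.card_fun]

end DegreeAux

/-- Let `n ≥ 2` be even and `d ≥ 1`.  Then every cell of the `n^d`
tic-tac-toe board is contained in at most `2^d − 1` winning lines, and if a
cell `x` has the property that there is a common `c ∈ [n]` with each (1-based)
coordinate of `x` equal to `c` or `n + 1 − c`, then `x` is contained in
exactly `2^d − 1` winning lines.  (Cells are `0`-based, so the 1-based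
coordinate is `(x i) + 1`, and `(x i) + 1 = n + 1 - (c + 1)` is expressed
additively as `((x i) + 1) + ((c) + 1) = n + 1`.) -/
theorem degree_le_even (n d : ℕ) (hn : 2 ≤ n) (heven : Even n) (hd : 1 ≤ d)
    (x : Fin d → Fin n) :
    Nat.card {L : Finset (Fin d → Fin n) // isWinningLine n d L ∧ x ∈ L} ≤
      2 ^ d - 1 ∧
    ((∃ c : Fin n, ∀ i : Fin d,
        x i = c ∨ ((x i : ℕ) + 1) + ((c : ℕ) + 1) = n + 1) →
      Nat.card {L : Finset (Fin d → Fin n) // isWinningLine n d L ∧ x ∈ L} =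
        2 ^ d - 1) := by
  classical
  have hcard : Nat.card {L : Finset (Fin d → Fin n) // isWinningLine n d L ∧ x ∈ L}
      = Nat.card {p : Fin n × (Fin d → Option Bool) // DegreeAux.Good x p} :=
    (Nat.card_eq_of_bijective _ (DegreeAux.F_bijective hn heven x)).symm
  rw [hcard]
  constructor
  · calc Nat.card {p : Fin n × (Fin d → Option Bool) // DegreeAux.Good x p}
        ≤ Nat.card {S : Fin d → Bool // ∃ i, S i = true} :=
          Nat.card_le_card_of_injective _ (DegreeAux.G_injective hn heven x)
      _ = 2 ^ d - 1 := DegreeAux.card_ne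
  · rintro ⟨c, hc⟩
    have hc' : ∀ i : Fin d, x i = c ∨ x i = c.rev := by
      intro i
      rcases hc i with h | h
      · exact Or.inl h
      · right
        have := c.isLt
        have := (x i).isLt
        exact Fin.ext (by simp [Fin.val_rev]; omega)
    rw [Nat.card_eq_of_bijective _
      ⟨DegreeAux.G_injective hn heven x, DegreeAux.G_surjective hn heven x ⟨c, hc'⟩⟩]
    exact DegreeAux.card_ne
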